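/- For every prime p with p ≡ 1 (mod 4), 64^p·((1/4)_p)^2/(p!)^2 ≡ (1/3)·C(4p,2p)·C(2p,p) (mod p^2), where both sides are integers (up to the unit 1/3 mod p^2, with p > 3). -/

import Mathlib

open Finset

lemma asc_eval_prod (n : ℕ) (x : ℚ) :
    (ascPochhammer ℚ n).eval x = ∏ i ∈ range n, (x + i) := by
  induction n with
  | zero => simp
  | succ n ih =>
    rw [ascPochhammer_succ_right, prod_range_succ, ← ih]
    simp [Polynomial.eval_mul]

lemma fact_eq (n : ℕ) : (4*n).factorial =
    4^n * (2*n).factorial * (∏ k ∈ range n, (4*k+1)) * (∏ k ∈ range n, (4*k+3)) := by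
  induction n with
  | zero => simp
  | succ n ih =>
    have e4 : 4*(n+1) = ((((4*n)+1)+1)+1)+1 := by ring
    have e2 : 2*(n+1) = ((2*n)+1)+1 := by ring
    rw [e4, e2, Nat.factorial_succ, Nat.factorial_succ, Nat.factorial_succ,
      Nat.factorial_succ, Nat.factorial_succ, Nat.factorial_succ,
      prod_range_succ, prod_range_succ, ih]
    ring

lemma prod_sub_expand {ι : Type*} [DecidableEq ι] (s : Finset ι) (f : ι → ℤ) (t : ℤ) :
    ∃ m : ℤ, ∏ i ∈ s, (f i - t) =
      ∏ i ∈ s, f i - t * ∑ i ∈ s, ∏ j ∈ s.erase i, f j + t^2 * m := by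
  induction s using Finset.induction_on with
  | empty => exact ⟨0, by simp⟩
  | @insert a s ha ih =>
    obtain ⟨m, hm⟩ := ih
    refine ⟨f a * m + (∑ i ∈ s, ∏ j ∈ s.erase i, f j) - t*m, ?_⟩
    rw [prod_insert ha, prod_insert ha, hm, sum_insert ha, erase_insert ha]
    have h2 : ∑ i ∈ s, ∏ j ∈ (insert a s).erase i, f j
        = ∑ i ∈ s, f a * ∏ j ∈ s.erase i, f j := by
      refine sum_congr rfl fun i hi => ?_
      rw [Finset.erase_insert_of_ne (by rintro rfl; exact ha hi),
        prod_insert (fun h => ha (Finset.mem_of_mem_erase h))]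
    rw [h2, ← Finset.mul_sum]
    ring

lemma zmod_sum_univ (p : ℕ) [hpf : Fact p.Prime] (hodd : p % 2 = 1) : ∑ x : ZMod p, x = 0 := by
  have hp := hpf.out
  have h : ∑ x : ZMod p, x = ∑ x : ZMod p, -x :=
    Fintype.sum_bijective _ neg_involutive.bijective _ _ (fun x => (neg_neg x).symm)
  rw [Finset.sum_neg_distrib] at h
  have h2 : (2 : ZMod p) * ∑ x : ZMod p, x = 0 := by linear_combination h
  have h2' : (2 : ZMod p) ≠ 0 := by
    have h3 : ((2:ℕ):ZMod p) ≠ 0 := by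
      rw [Ne, ZMod.natCast_eq_zero_iff]
      intro hdvd
      have := Nat.le_of_dvd two_pos hdvd
      have := hp.one_lt
      omega
    simpa using h3
  exact (mul_eq_zero.mp h2).resolve_left h2' 

lemma zmod_sum_inv (p : ℕ) [hpf : Fact p.Prime] (hodd : p % 2 = 1) : ∑ x : ZMod p, x⁻¹ = 0 := by
  have hp := hpf.out
  have hinv : Function.Involutive (fun x : ZMod p => x⁻¹) := fun x => inv_inv x
  have h : ∑ x : ZMod p, x⁻¹ = ∑ x : ZMod p, x :=
    Fintype.sum_bijective _ hinv.bijective _ _ (fun x => rfl)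
  rw [h]; exact zmod_sum_univ p hodd

lemma sum_range_zmod (p : ℕ) [NeZero p] {M : Type*} [AddCommMonoid M] (F : ZMod p → M) :
    ∑ k ∈ Finset.range p, F (k : ZMod p) = ∑ x : ZMod p, F x := by
  refine Finset.sum_nbij' (fun k => (k : ZMod p)) (fun x => x.val) (fun a _ => Finset.mem_univ _)
    (fun x _ => Finset.mem_range.mpr (ZMod.val_lt x)) ?_ ?_ (fun a _ => rfl)
  · intro a ha
    exact ZMod.val_natCast_of_lt (Finset.mem_range.mp ha)
  · intro x _
    simp [ZMod.natCast_val, ZMod.ringHom_map_cast]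

lemma sum_dvd (p : ℕ) (hp : p.Prime) (h4 : p % 4 = 1) :
    (p : ℤ) ∣ ∑ k ∈ (range p).erase ((p-1)/4),
      ∏ j ∈ ((range p).erase ((p-1)/4)).erase k, (4*(j:ℤ)+1) := by
  haveI : Fact p.Prime := ⟨hp⟩
  have hp5 : 5 ≤ p := by have := hp.two_le; omega
  set k0 := (p-1)/4 with hk0def
  have hk0 : 4*k0+1 = p := by omega
  set s : Finset ℕ := (range p).erase k0 with hsdef
  rw [← ZMod.intCast_zmod_eq_zero_iff_dvd]
  push_cast
  set g : ℕ → ZMod p := fun k => 4*(k:ZMod p)+1 with hgdef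
  have key : ∀ k ∈ s, g k ≠ 0 := by
    intro k hk hzero
    have hkne : k ≠ k0 := (Finset.mem_erase.mp hk).1
    have hklt : k < p := Finset.mem_range.mp (Finset.mem_erase.mp hk).2
    have : ((4*k+1 : ℕ) : ZMod p) = 0 := by push_cast; exact hzero
    obtain ⟨c, hc⟩ := (ZMod.natCast_eq_zero_iff _ _).mp this
    have hc4 : c < 4 := by nlinarith
    interval_cases c <;> omega
  have step : ∀ k ∈ s, ∏ j ∈ s.erase k, g j = (∏ j ∈ s, g j) * (g k)⁻¹ := by
    intro k hk
    rw [eq_mul_inv_iff_mul_eq₀ (key k hk), mul_comm]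
    exact Finset.mul_prod_erase s g hk
  rw [Finset.sum_congr rfl step, ← Finset.mul_sum]
  have hsum : ∑ k ∈ s, (g k)⁻¹ = 0 := by
    have h0 : g k0 = 0 := by
      have : ((4*k0+1 : ℕ) : ZMod p) = 0 := by rw [hk0]; exact ZMod.natCast_self p
      push_cast at this; exact this
    have hmem : k0 ∈ range p := Finset.mem_range.mpr (by omega)
    have := Finset.add_sum_erase (range p) (fun k => (g k)⁻¹) hmem
    simp only [h0, inv_zero, zero_add] at this
    rw [hsdef, this]
    have hbij : Function.Bijective (fun x : ZMod p => 4*x+1) := by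
      rw [Finite.injective_iff_bijective.symm]
      intro x y hxy
      have h4ne : (4 : ZMod p) ≠ 0 := by
        have : ((4:ℕ) : ZMod p) ≠ 0 := by
          rw [Ne, ZMod.natCast_eq_zero_iff]
          intro hdvd; have := Nat.le_of_dvd (by norm_num) hdvd; omega
        simpa using this
      exact mul_left_cancel₀ h4ne (by linear_combination hxy)
    calc ∑ k ∈ range p, (g k)⁻¹ = ∑ x : ZMod p, (4*x+1)⁻¹ :=
          sum_range_zmod p (fun x => (4*x+1)⁻¹)
      _ = ∑ y : ZMod p, y⁻¹ := Fintype.sum_bijective _ hbij _ _ (fun x => rfl)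
      _ = 0 := zmod_sum_inv p (by omega)
  rw [hsum, mul_zero]

lemma key_int (p : ℕ) (hp : p.Prime) (h4 : p % 4 = 1) :
    ∃ c : ℤ, (∏ k ∈ range p, (4*(k:ℤ)+1)) *
      (3 * (∏ k ∈ range p, (4*(k:ℤ)+1)) - ∏ k ∈ range p, (4*(k:ℤ)+3)) = (p:ℤ)^4 * c := by
  have hp5 : 5 ≤ p := by have := hp.two_le; omega
  set k0 := (p-1)/4 with hk0def
  have hk0 : 4*k0+1 = p := by omega
  have hk0mem : k0 ∈ range p := Finset.mem_range.mpr (by omega)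
  set s : Finset ℕ := (range p).erase k0 with hsdef
  set A : ℤ := ∏ k ∈ range p, (4*(k:ℤ)+1) with hAdef
  set B : ℤ := ∏ k ∈ range p, (4*(k:ℤ)+3) with hBdef
  set A' : ℤ := ∏ k ∈ s, (4*(k:ℤ)+1) with hA'def
  set C' : ℤ := ∏ k ∈ s, (4*(k:ℤ)+1 - 4*(p:ℤ)) with hC'def
  set S : ℤ := ∑ k ∈ s, ∏ j ∈ s.erase k, (4*(j:ℤ)+1) with hSdef
  -- A = p * A'
  have hA : A = (p:ℤ) * A' := by
    have := Finset.mul_prod_erase (range p) (fun k => (4*(k:ℤ)+1)) hk0mem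
    rw [hAdef, ← this, hA'def]
    congr 1
    push_cast [← hk0]
    ring
  -- B = 3p * C'
  have hB : B = 3*(p:ℤ) * C' := by
    have hrefl := Finset.prod_range_reflect (fun k => (4*(k:ℤ)+3)) p
    have hcongr : ∏ j ∈ range p, (4*((p-1-j : ℕ):ℤ)+3)
        = ∏ j ∈ range p, (-1) * ((4*(j:ℤ)+1) - 4*(p:ℤ)) := by
      refine Finset.prod_congr rfl fun j hj => ?_
      have hj' : j < p := Finset.mem_range.mp hj
      have : ((p-1-j : ℕ):ℤ) = (p:ℤ) - 1 - j := by
        push_cast [Nat.cast_sub (by omega : 1 ≤ p), Nat.cast_sub (by omega : j ≤ p - 1)]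
        omega
      rw [this]; ring
    have hBrw : B = ∏ j ∈ range p, (-1) * ((4*(j:ℤ)+1) - 4*(p:ℤ)) := by
      rw [hBdef, ← hrefl, ← hcongr]
    rw [hBrw, Finset.prod_mul_distrib, Finset.prod_const, Finset.card_range,
      Odd.neg_one_pow (Nat.odd_iff.mpr (by omega))]
    have hsplit := Finset.mul_prod_erase (range p)
      (fun k => (4*(k:ℤ)+1 - 4*(p:ℤ))) hk0mem
    rw [← hsplit, ← hC'def]
    have h3 : 4*(k0:ℤ)+1 - 4*(p:ℤ) = -3*(p:ℤ) := by push_cast [← hk0]; ring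
    beta_reduce
    rw [h3]; ring
  obtain ⟨m, hm⟩ := prod_sub_expand s (fun k => 4*(k:ℤ)+1) (4*(p:ℤ))
  rw [← hA'def, ← hSdef, ← hC'def] at hm
  obtain ⟨d, hd⟩ := sum_dvd p hp h4
  rw [← hsdef, ← hSdef] at hd
  exact ⟨A' * (12*d - 48*m), by rw [hA, hB, hm, hd]; ring⟩

/-- For every prime `p ≡ 1 (mod 4)`,
`64^p ((1/4)_p)^2/(p!)^2 ≡ (1/3) C(4p,2p) C(2p,p) (mod p^2)`. -/
theorem s_p_choose_cong (p : ℕ) (hp : p.Prime) (h4 : p % 4 = 1) :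
    padicNorm p
      ((64 : ℚ) ^ p * ((ascPochhammer ℚ p).eval (1/4)) ^ 2 / (p.factorial : ℚ) ^ 2
        - (1 / 3) * ((4 * p).choose (2 * p) : ℚ) * ((2 * p).choose p : ℚ))
      ≤ (p : ℚ) ^ (-(2 : ℤ)) := by
  haveI : Fact p.Prime := ⟨hp⟩
  have hp5 : 5 ≤ p := by have := hp.two_le; omega
  set AQ : ℚ := ∏ k ∈ range p, (4*(k:ℚ)+1) with hAQ
  set BQ : ℚ := ∏ k ∈ range p, (4*(k:ℚ)+3) with hBQ
  have hX : (4:ℚ)^p ≠ 0 := pow_ne_zero _ (by norm_num)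
  have hfp : ((p.factorial : ℕ) : ℚ) ≠ 0 := Nat.cast_ne_zero.mpr p.factorial_ne_zero
  have hf2p : (((2*p).factorial : ℕ) : ℚ) ≠ 0 := Nat.cast_ne_zero.mpr (2*p).factorial_ne_zero
  have hf1 : (((p-1).factorial : ℕ) : ℚ) ≠ 0 := Nat.cast_ne_zero.mpr (p-1).factorial_ne_zero
  have hp0 : (p:ℚ) ≠ 0 := Nat.cast_ne_zero.mpr (by omega)
  -- pochhammer
  have h1 : (ascPochhammer ℚ p).eval (1/4) = AQ / (4:ℚ)^p := by
    rw [eq_div_iff hX, asc_eval_prod, hAQ]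
    rw [show (4:ℚ)^p = ∏ _k ∈ range p, (4:ℚ) by rw [prod_const, card_range]]
    rw [← Finset.prod_mul_distrib]
    exact Finset.prod_congr rfl fun k _ => by ring
  -- choose
  have h2 : (((4*p).choose (2*p) : ℕ) : ℚ) = ((4*p).factorial : ℚ)
      / (((2*p).factorial : ℚ) * ((2*p).factorial : ℚ)) := by
    rw [eq_div_iff (by positivity)]
    have := Nat.choose_mul_factorial_mul_factorial (show 2*p ≤ 4*p by omega)
    rw [show 4*p - 2*p = 2*p from by omega] at this
    rw [← mul_assoc]; exact_mod_cast congrArg (Nat.cast : ℕ → ℚ) this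
  have h3 : (((2*p).choose p : ℕ) : ℚ) = ((2*p).factorial : ℚ)
      / ((p.factorial : ℚ) * (p.factorial : ℚ)) := by
    rw [eq_div_iff (by positivity)]
    have := Nat.choose_mul_factorial_mul_factorial (show p ≤ 2*p by omega)
    rw [show 2*p - p = p from by omega] at this
    rw [← mul_assoc]; exact_mod_cast congrArg (Nat.cast : ℕ → ℚ) this
  have h4f : ((4*p).factorial : ℚ) = 4^p * ((2*p).factorial : ℚ) * AQ * BQ := by
    have := congrArg (Nat.cast : ℕ → ℚ) (fact_eq p)
    push_cast at this
    exact this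
  obtain ⟨c, hc⟩ := key_int p hp h4
  have h5 : AQ * (3*AQ - BQ) = (p:ℚ)^4 * (c:ℚ) := by
    have := congrArg (Int.cast : ℤ → ℚ) hc
    push_cast at this
    exact this
  have hfact : (p.factorial : ℚ) = (p:ℚ) * ((p-1).factorial : ℚ) := by
    rw [← Nat.mul_factorial_pred (by omega : p ≠ 0)]
    push_cast
    ring
  have h64 : (64:ℚ)^p = (4:ℚ)^p * (4:ℚ)^p * (4:ℚ)^p := by
    rw [← mul_pow, ← mul_pow]; norm_num
  have hdiff : (64 : ℚ) ^ p * ((ascPochhammer ℚ p).eval (1/4)) ^ 2 / (p.factorial : ℚ) ^ 2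
        - (1 / 3) * ((4 * p).choose (2 * p) : ℚ) * ((2 * p).choose p : ℚ)
      = (((p:ℤ)^2 * c * 4^p : ℤ) : ℚ) / (3 * (((p-1).factorial : ℕ) : ℚ)^2) := by
    have step1 : (64 : ℚ) ^ p * ((ascPochhammer ℚ p).eval (1/4)) ^ 2 / (p.factorial : ℚ) ^ 2
        - (1 / 3) * ((4 * p).choose (2 * p) : ℚ) * ((2 * p).choose p : ℚ)
        = (4:ℚ)^p * (AQ * (3*AQ - BQ)) / (3 * (p.factorial : ℚ)^2) := by
      rw [h1, h2, h3, h64, h4f]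
      field_simp
    rw [step1, h5, hfact]
    push_cast
    field_simp
  rw [hdiff, padicNorm.div]
  have hden : padicNorm p (3 * (((p-1).factorial : ℕ):ℚ)^2) = 1 := by
    have heq : (3 * (((p-1).factorial : ℕ):ℚ)^2) = ((3 * ((p-1).factorial)^2 : ℕ) : ℚ) := by
      push_cast; ring
    rw [heq, padicNorm.nat_eq_one_iff]
    intro hdvd
    rcases (Nat.Prime.dvd_mul hp).mp hdvd with h | h
    · have := Nat.le_of_dvd (by norm_num) h; omega
    · have := (Nat.Prime.dvd_factorial hp).mp (hp.dvd_of_dvd_pow h)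
      omega
  rw [hden, div_one]
  have hdvd : ((p^2 : ℕ) : ℤ) ∣ ((p:ℤ)^2 * c * 4^p) := ⟨c * 4^p, by push_cast; ring⟩
  have hle := (padicNorm.dvd_iff_norm_le (p := p)).mp hdvd
  simpa using hle
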